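/- In the family p : Π_n^+(Δ) → Π_n(Δ) of subdivided simplices, let σ be a cone of Π_n^+(Δ) with image cone μ. For every integral point (u_1,...,u_n) ∈ μ (i.e. all u_i ∈ ℤ^r), every vertex v of the fiber polyhedron p^{-1}(u_1,...,u_n) ∩ σ is an integral point of ℝ^r. In particular, the lattice of σ surjects onto the lattice of μ. -/

import Mathlib

/-!
STATEMENT 11 (combinatorial reducedness of `p`, from Proposition 4.9): in the
family `p : Π_n^+(Δ) → Π_n(Δ)`, let `σ = CnP w` be a cone of `Π_n^+(Δ)` with
image cone `μ`.  For every integral point `(u_1, …, u_n)` of `μ`, every vertex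
(extreme point) of the fiber polyhedron `p^{-1}(u) ∩ σ` is an integral point.
In particular, the lattice of `σ` surjects onto the lattice of `μ`.
-/

open scoped BigOperators

open Filter Topology

/-- `cone(Δ^n)`: tuples of `n` points of `ℝ_{≥0}^r` having equal coordinate
sums (common height). -/
def coneD (n r : ℕ) : Set (Fin n → Fin r → ℝ) :=
  {u | (∀ i j, 0 ≤ u i j) ∧ ∀ i i', ∑ j, u i j = ∑ j, u i' j}

/-- `cone(Δ × Δ^n)`: `(n+1)`-tuples, the extra point labelled `0 = none`. -/
def coneDP (n r : ℕ) : Set (Option (Fin n) → Fin r → ℝ) :=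
  {w | (∀ a j, 0 ≤ w a j) ∧ ∀ a b, ∑ j, w a j = ∑ j, w b j}

/-- Relation prescribed by a side choice. -/
def ordRel : Ordering → ℝ → ℝ → Prop
  | .lt, a, b => a ≤ b
  | .eq, a, b => a = b
  | .gt, a, b => b ≤ a

/-- Non-emptiness of the closed cell of the height-slice simplex determined by
a side choice `ε` relative to the hyperplanes `x_j = u_i^{(j)}`. -/
def cellNE {n r : ℕ} (u : Fin n → Fin r → ℝ) (ε : Fin n → Fin r → Ordering) : Prop :=
  ∃ x : Fin r → ℝ, (∀ j, 0 ≤ x j) ∧ (∀ i, ∑ j, x j = ∑ j, u i j) ∧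
    ∀ i j, ordRel (ε i j) (x j) (u i j)

/-- Two tuples have the same combinatorial type of marked simplex-lattice
subdivision when the corresponding cells are non-empty simultaneously. -/
def typeEquiv {n r : ℕ} (u u' : Fin n → Fin r → ℝ) : Prop :=
  ∀ ε : Fin n → Fin r → Ordering, cellNE u ε ↔ cellNE u' ε

/-- The cone of `Π_n(Δ)` determined by (the combinatorial type of) `u`:
the closure of its combinatorial-equivalence class. -/
def Cn {n r : ℕ} (u : Fin n → Fin r → ℝ) : Set (Fin n → Fin r → ℝ) :=
  closure {u' | u' ∈ coneD n r ∧ typeEquiv u u'}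

/-- The projection `p : cone(Δ × Δ^n) → cone(Δ^n)`. -/
def projP {n r : ℕ} (w : Option (Fin n) → Fin r → ℝ) : Fin n → Fin r → ℝ :=
  fun i => w (some i)

/-- Combinatorial equivalence for `(n+1)`-tuples: same type of the underlying
`n`-tuple, and the extra point `x = w none` compares identically with the
hyperplanes `x_j = u_i^{(j)}` and the boundary `x_j = 0`. -/
def wEquiv {n r : ℕ} (w w' : Option (Fin n) → Fin r → ℝ) : Prop :=
  typeEquiv (projP w) (projP w') ∧
  (∀ j, w none j = 0 ↔ w' none j = 0) ∧
  ∀ i j, (w none j ≤ w (some i) j ↔ w' none j ≤ w' (some i) j) ∧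
         (w (some i) j ≤ w none j ↔ w' (some i) j ≤ w' none j)

/-- The cone of `Π_n^+(Δ)` determined by `w`. -/
def CnP {n r : ℕ} (w : Option (Fin n) → Fin r → ℝ) :
    Set (Option (Fin n) → Fin r → ℝ) :=
  closure {w' | w' ∈ coneDP n r ∧ wEquiv w w'}


lemma isClosed_coneDP (n r : ℕ) : IsClosed (coneDP n r) := by
  have h1 : IsClosed {w : Option (Fin n) → Fin r → ℝ | ∀ a j, 0 ≤ w a j} := by
    have : {w : Option (Fin n) → Fin r → ℝ | ∀ a j, 0 ≤ w a j} =
        ⋂ (a) (j), {w | 0 ≤ w a j} := by ext w; simp [Set.mem_iInter]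
    rw [this]
    exact isClosed_iInter fun a => isClosed_iInter fun j =>
      isClosed_le continuous_const ((continuous_apply j).comp (continuous_apply a))
  have h2 : IsClosed {w : Option (Fin n) → Fin r → ℝ | ∀ a b, ∑ j, w a j = ∑ j, w b j} := by
    have : {w : Option (Fin n) → Fin r → ℝ | ∀ a b, ∑ j, w a j = ∑ j, w b j} =
        ⋂ (a) (b), {w | ∑ j, w a j = ∑ j, w b j} := by ext w; simp [Set.mem_iInter]
    rw [this]
    refine isClosed_iInter fun a => isClosed_iInter fun b => isClosed_eq ?_ ?_ <;>
      exact continuous_finset_sum _ fun j _ => (continuous_apply j).comp (continuous_apply _)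
  exact h1.inter h2

lemma CnP_subset_coneDP {n r : ℕ} {w : Option (Fin n) → Fin r → ℝ} :
    CnP w ⊆ coneDP n r :=
  closure_minimal (fun _ h => h.1) (isClosed_coneDP n r)

/-- Move the `none` component by `t • d`. -/
def mv {n r : ℕ} (q : Option (Fin n) → Fin r → ℝ) (d : Fin r → ℝ) (t : ℝ) :
    Option (Fin n) → Fin r → ℝ :=
  fun a => match a with
  | none => fun j => q none j + t * d j
  | some i => q (some i)

lemma floor_lt_of_not_int {x : ℝ} (h : ¬ ∃ z : ℤ, x = (z : ℝ)) : (⌊x⌋ : ℝ) < x :=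
  (Int.floor_le x).lt_of_ne fun he => h ⟨⌊x⌋, he.symm⟩

lemma lt_ceil_of_not_int {x : ℝ} (h : ¬ ∃ z : ℤ, x = (z : ℝ)) : x < (⌈x⌉ : ℝ) :=
  (Int.le_ceil x).lt_of_ne fun he => h ⟨⌈x⌉, he⟩

lemma move_strict {n r : ℕ} {w q : Option (Fin n) → Fin r → ℝ} (hq : q ∈ CnP w)
    (hqint : ∀ i j, ∃ z : ℤ, q (some i) j = (z : ℝ))
    {d : Fin r → ℝ} {t : ℝ}
    (hsum : IsEmpty (Fin n) ∨ ∑ j, d j = 0)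
    (hni : ∀ j, d j ≠ 0 → ¬ ∃ z : ℤ, q none j = (z : ℝ))
    (hlo : ∀ j, d j ≠ 0 → ((⌊q none j⌋ : ℝ) < q none j + t * d j))
    (hhi : ∀ j, d j ≠ 0 → q none j + t * d j < (⌈q none j⌉ : ℝ)) :
    mv q d t ∈ CnP w := by
  classical
  obtain ⟨f, hfE, hft⟩ := mem_closure_iff_seq_limit.1 hq
  have hcoord : ∀ a j, Tendsto (fun m => f m a j) atTop (𝓝 (q a j)) := fun a j =>
    tendsto_pi_nhds.1 (tendsto_pi_nhds.1 hft a) j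
  have hqc : q ∈ coneDP n r := CnP_subset_coneDP hq
  -- positivity of perturbed limit coordinate
  have hpos : ∀ j, d j ≠ 0 → 0 < q none j + t * d j := by
    intro j hdj
    refine lt_of_le_of_lt ?_ (hlo j hdj)
    exact_mod_cast Int.floor_nonneg.2 (hqc.1 none j)
  -- w's zero pattern
  have hw0 : ∀ j, d j ≠ 0 → w none j ≠ 0 := by
    intro j hdj hw0j
    have hz : ∀ m, f m none j = 0 := fun m => ((hfE m).2.2.1 j).1 hw0j
    have : Tendsto (fun _ : ℕ => (0 : ℝ)) atTop (𝓝 (q none j)) := by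
      simpa [hz] using hcoord none j
    exact hni j hdj ⟨0, by simpa using (tendsto_nhds_unique this tendsto_const_nhds)⟩
  -- not both comparisons can be equalities
  have hAB : ∀ i j, d j ≠ 0 →
      ¬ (w none j ≤ w (some i) j ∧ w (some i) j ≤ w none j) := by
    intro i j hdj ⟨hA, hB⟩
    have heq : ∀ m, f m none j = f m (some i) j := fun m =>
      le_antisymm (((hfE m).2.2.2 i j).1.1 hA) (((hfE m).2.2.2 i j).2.1 hB)
    have : q none j = q (some i) j := by
      have h1 := hcoord none j
      have h2 : Tendsto (fun m => f m none j) atTop (𝓝 (q (some i) j)) := by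
        simpa [heq] using hcoord (some i) j
      exact tendsto_nhds_unique h1 h2
    exact hni j hdj (this ▸ hqint i j)
  -- eventual facts
  have hev1 : ∀ᶠ m in atTop, ∀ j, d j ≠ 0 → 0 < f m none j + t * d j := by
    rw [eventually_all]
    intro j
    by_cases hdj : d j = 0
    · exact Eventually.of_forall fun m hc => absurd hdj hc
    · have ht : Tendsto (fun m => f m none j + t * d j) atTop (𝓝 (q none j + t * d j)) :=
        (hcoord none j).add tendsto_const_nhds
      filter_upwards [ht (Ioi_mem_nhds (hpos j hdj))] with m hm _
      exact hm
  have hev2 : ∀ᶠ m in atTop, ∀ i j, d j ≠ 0 →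
      ((w none j ≤ w (some i) j ↔ f m none j + t * d j ≤ f m (some i) j) ∧
       (w (some i) j ≤ w none j ↔ f m (some i) j ≤ f m none j + t * d j)) := by
    rw [eventually_all]
    intro i
    rw [eventually_all]
    intro j
    by_cases hdj : d j = 0
    · exact Eventually.of_forall fun m hc => absurd hdj hc
    · obtain ⟨z, hz⟩ := hqint i j
      by_cases hA : w none j ≤ w (some i) j
      · have hB : ¬ w (some i) j ≤ w none j := fun hB => hAB i j hdj ⟨hA, hB⟩
        -- f m none j < f m (some i) j for all m; limit: q none j ≤ q (some i) j
        have hstrict : ∀ m, f m none j < f m (some i) j := by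
          intro m
          rcases lt_or_ge (f m none j) (f m (some i) j) with h | h
          · exact h
          · exact absurd (((hfE m).2.2.2 i j).2.2 h) hB
        have hle : q none j ≤ q (some i) j :=
          le_of_tendsto_of_tendsto' (hcoord none j) (hcoord (some i) j)
            fun m => (hstrict m).le
        have hlt : q none j < q (some i) j :=
          hle.lt_of_ne fun he => hni j hdj (he ▸ hqint i j)
        have hceil : (⌈q none j⌉ : ℝ) ≤ q (some i) j := by
          rw [hz] at hlt ⊢
          exact_mod_cast Int.ceil_le.2 hlt.le
        have hlim : q none j + t * d j < q (some i) j :=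
          lt_of_lt_of_le (hhi j hdj) hceil
        have ht : Tendsto (fun m => f m (some i) j - (f m none j + t * d j)) atTop
            (𝓝 (q (some i) j - (q none j + t * d j))) :=
          (hcoord (some i) j).sub ((hcoord none j).add tendsto_const_nhds)
        filter_upwards [ht (Ioi_mem_nhds (sub_pos.2 hlim))] with m hm _
        have hm' : f m none j + t * d j < f m (some i) j := by
          have : (0:ℝ) < f m (some i) j - (f m none j + t * d j) := hm
          linarith
        exact ⟨iff_of_true hA hm'.le, iff_of_false hB (not_le.2 hm')⟩
      · have hB : w (some i) j ≤ w none j := (le_of_not_ge hA)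
        have hstrict : ∀ m, f m (some i) j < f m none j := by
          intro m
          rcases lt_or_ge (f m (some i) j) (f m none j) with h | h
          · exact h
          · exact absurd (((hfE m).2.2.2 i j).1.2 h) hA
        have hle : q (some i) j ≤ q none j :=
          le_of_tendsto_of_tendsto' (hcoord (some i) j) (hcoord none j)
            fun m => (hstrict m).le
        have hlt : q (some i) j < q none j :=
          hle.lt_of_ne fun he => hni j hdj (he ▸ hqint i j)
        have hfloor : q (some i) j ≤ (⌊q none j⌋ : ℝ) := by
          rw [hz] at hlt ⊢
          exact_mod_cast Int.le_floor.2 hlt.le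
        have hlim : q (some i) j < q none j + t * d j :=
          lt_of_le_of_lt hfloor (hlo j hdj)
        have ht : Tendsto (fun m => (f m none j + t * d j) - f m (some i) j) atTop
            (𝓝 ((q none j + t * d j) - q (some i) j)) :=
          ((hcoord none j).add tendsto_const_nhds).sub (hcoord (some i) j)
        filter_upwards [ht (Ioi_mem_nhds (sub_pos.2 hlim))] with m hm _
        have hm' : f m (some i) j < f m none j + t * d j := by
          have : (0:ℝ) < (f m none j + t * d j) - f m (some i) j := hm
          linarith
        exact ⟨iff_of_false hA (not_le.2 hm'), iff_of_true hB hm'.le⟩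
  -- tendsto of moved sequence
  have htend : Tendsto (fun m => mv (f m) d t) atTop (𝓝 (mv q d t)) := by
    rw [tendsto_pi_nhds]
    intro a
    rw [tendsto_pi_nhds]
    intro j
    cases a with
    | none =>
      show Tendsto (fun m => f m none j + t * d j) atTop (𝓝 (q none j + t * d j))
      exact (hcoord none j).add tendsto_const_nhds
    | some i =>
      show Tendsto (fun m => f m (some i) j) atTop (𝓝 (q (some i) j))
      exact hcoord (some i) j
  refine mem_closure_of_tendsto htend ?_
  filter_upwards [hev1, hev2] with m h1 h2
  have hm0 := hfE m
  refine ⟨⟨?_, ?_⟩, ?_, ?_, ?_⟩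
  · -- nonneg
    intro a j
    cases a with
    | none =>
      by_cases hdj : d j = 0
      · show 0 ≤ f m none j + t * d j
        rw [hdj, mul_zero, add_zero]; exact hm0.1.1 none j
      · exact (h1 j hdj).le
    | some i => exact hm0.1.1 (some i) j
  · -- sums
    intro a b
    rcases hsum with hemp | hd0
    · cases a with
      | some i => exact (hemp.false i).elim
      | none => cases b with
        | some i => exact (hemp.false i).elim
        | none => rfl
    · have hS : ∑ j, mv (f m) d t none j = ∑ j, f m none j := by
        show ∑ j, (f m none j + t * d j) = ∑ j, f m none j
        rw [Finset.sum_add_distrib, ← Finset.mul_sum, hd0, mul_zero, add_zero]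
      cases a with
      | none => cases b with
        | none => rfl
        | some i =>
          show ∑ j, mv (f m) d t none j = ∑ j, f m (some i) j
          rw [hS]; exact hm0.1.2 none (some i)
      | some i => cases b with
        | none =>
          show ∑ j, f m (some i) j = ∑ j, mv (f m) d t none j
          rw [hS]; exact hm0.1.2 (some i) none
        | some i' => exact hm0.1.2 (some i) (some i')
  · -- typeEquiv
    have : projP (mv (f m) d t) = projP (f m) := rfl
    rw [this]
    exact hm0.2.1
  · -- zero pattern
    intro j
    by_cases hdj : d j = 0
    · show w none j = 0 ↔ f m none j + t * d j = 0
      rw [hdj, mul_zero, add_zero]; exact hm0.2.2.1 j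
    · exact iff_of_false (hw0 j hdj) (h1 j hdj).ne'
  · -- comparisons
    intro i j
    by_cases hdj : d j = 0
    · show (w none j ≤ w (some i) j ↔ f m none j + t * d j ≤ f m (some i) j) ∧
          (w (some i) j ≤ w none j ↔ f m (some i) j ≤ f m none j + t * d j)
      rw [hdj, mul_zero, add_zero]; exact hm0.2.2.2 i j
    · exact h2 i j hdj

lemma move_weak {n r : ℕ} {w q : Option (Fin n) → Fin r → ℝ} (hq : q ∈ CnP w)
    (hqint : ∀ i j, ∃ z : ℤ, q (some i) j = (z : ℝ))
    {d : Fin r → ℝ} {t : ℝ}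
    (hsum : IsEmpty (Fin n) ∨ ∑ j, d j = 0)
    (hni : ∀ j, d j ≠ 0 → ¬ ∃ z : ℤ, q none j = (z : ℝ))
    (hlo : ∀ j, d j ≠ 0 → ((⌊q none j⌋ : ℝ) ≤ q none j + t * d j))
    (hhi : ∀ j, d j ≠ 0 → q none j + t * d j ≤ (⌈q none j⌉ : ℝ)) :
    mv q d t ∈ CnP w := by
  set c : ℕ → ℝ := fun m => ((m : ℝ) + 2)⁻¹ with hc
  have hc0 : ∀ m, 0 < c m := fun m => by positivity
  have hc1 : ∀ m, c m < 1 := by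
    intro m
    rw [hc]
    rw [inv_lt_one_iff₀]
    right
    have : (0:ℝ) ≤ (m:ℝ) := Nat.cast_nonneg m
    linarith
  have hmem : ∀ m, mv q d ((1 - c m) * t) ∈ CnP w := by
    intro m
    refine move_strict hq hqint hsum hni ?_ ?_
    · intro j hdj
      have hflo := floor_lt_of_not_int (hni j hdj)
      have hwk := hlo j hdj
      have h1 : 0 < c m * (q none j - (⌊q none j⌋ : ℝ)) :=
        mul_pos (hc0 m) (sub_pos.2 hflo)
      have h2 : 0 ≤ (1 - c m) * (q none j + t * d j - (⌊q none j⌋ : ℝ)) :=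
        mul_nonneg (by linarith [hc1 m]) (by linarith)
      nlinarith [h1, h2]
    · intro j hdj
      have hhiq := lt_ceil_of_not_int (hni j hdj)
      have hwk := hhi j hdj
      have h1 : 0 < c m * ((⌈q none j⌉ : ℝ) - q none j) :=
        mul_pos (hc0 m) (sub_pos.2 hhiq)
      have h2 : 0 ≤ (1 - c m) * ((⌈q none j⌉ : ℝ) - (q none j + t * d j)) :=
        mul_nonneg (by linarith [hc1 m]) (by linarith)
      nlinarith [h1, h2]
  have hctend : Tendsto c atTop (𝓝 0) := by
    have h1 : Tendsto (fun m : ℕ => (m : ℝ) + 2) atTop atTop :=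
      Filter.tendsto_atTop_add_const_right atTop 2 tendsto_natCast_atTop_atTop
    exact h1.inv_tendsto_atTop
  have htend : Tendsto (fun m => mv q d ((1 - c m) * t)) atTop (𝓝 (mv q d t)) := by
    rw [tendsto_pi_nhds]
    intro a
    rw [tendsto_pi_nhds]
    intro j
    cases a with
    | none =>
      show Tendsto (fun m => q none j + ((1 - c m) * t) * d j) atTop
        (𝓝 (q none j + t * d j))
      have : Tendsto (fun m => ((1 - c m) * t) * d j) atTop (𝓝 (t * d j)) := by
        have h1 : Tendsto (fun m => 1 - c m) atTop (𝓝 1) := by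
          simpa using tendsto_const_nhds.sub hctend
        simpa using (h1.mul_const t).mul_const (d j)
      simpa using tendsto_const_nhds.add this
    | some i =>
      show Tendsto (fun _ => q (some i) j) atTop (𝓝 (q (some i) j))
      exact tendsto_const_nhds
  have hcl : IsClosed (CnP w) := isClosed_closure
  exact hcl.mem_of_tendsto htend (Eventually.of_forall hmem)

lemma isInt_sum {ι : Type*} (s : Finset ι) (f : ι → ℝ)
    (h : ∀ i ∈ s, ∃ z : ℤ, f i = (z : ℝ)) : ∃ z : ℤ, ∑ i ∈ s, f i = (z : ℝ) := by
  classical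
  induction s using Finset.induction with
  | empty => exact ⟨0, by simp⟩
  | insert _ _ hx ih =>
    obtain ⟨z1, hz1⟩ := h _ (Finset.mem_insert_self _ _)
    obtain ⟨z2, hz2⟩ := ih fun i hi => h i (Finset.mem_insert_of_mem hi)
    exact ⟨z1 + z2, by rw [Finset.sum_insert hx, hz1, hz2]; push_cast; ring⟩

lemma exists_second {n r : ℕ} {q : Option (Fin n) → Fin r → ℝ} (hq : q ∈ coneDP n r)
    (i0 : Fin n) (hqint : ∀ j, ∃ z : ℤ, q (some i0) j = (z : ℝ))
    {j : Fin r} (hj : ¬∃ z : ℤ, q none j = (z : ℝ)) :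
    ∃ k, k ≠ j ∧ ¬∃ z : ℤ, q none k = (z : ℝ) := by
  classical
  by_contra hall
  push_neg at hall
  have hsum : ∃ z : ℤ, ∑ j', q none j' = (z : ℝ) := by
    rw [hq.2 none (some i0)]
    exact isInt_sum _ _ fun j' _ => hqint j'
  obtain ⟨zs, hzs⟩ := hsum
  obtain ⟨ze, hze⟩ := isInt_sum (Finset.univ.erase j) (fun j' => q none j')
    (fun j' hj' => hall j' (Finset.ne_of_mem_erase hj'))
  refine hj ⟨zs - ze, ?_⟩
  have hadd := Finset.add_sum_erase Finset.univ (fun j' => q none j') (Finset.mem_univ j)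
  push_cast
  linarith [hadd, hzs, hze]

theorem stmt11 (n r : ℕ) (w : Option (Fin n) → Fin r → ℝ) (hw : w ∈ coneDP n r)
    (u : Fin n → Fin r → ℝ) (hu : u ∈ projP '' CnP w)
    (hint : ∀ i j, ∃ z : ℤ, u i j = (z : ℝ)) :
    (∀ q ∈ Set.extremePoints ℝ (CnP w ∩ projP ⁻¹' {u}),
        ∀ (a : Option (Fin n)) (j : Fin r), ∃ z : ℤ, q a j = (z : ℝ)) ∧
    (∃ q ∈ CnP w, projP q = u ∧
        ∀ (a : Option (Fin n)) (j : Fin r), ∃ z : ℤ, q a j = (z : ℝ)) := by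

  classical
  constructor
  · -- extreme points are integral
    intro q hq
    rw [mem_extremePoints] at hq
    obtain ⟨hqS, hext⟩ := hq
    have hq1 : q ∈ CnP w := hqS.1
    have hq2 : projP q = u := hqS.2
    have hqint : ∀ i j, ∃ z : ℤ, q (some i) j = (z : ℝ) := by
      intro i j
      rw [show q (some i) j = u i j from congrFun (congrFun hq2 i) j]
      exact hint i j
    intro a j
    cases a with
    | some i => exact hqint i j
    | none =>
      by_contra hnz
      suffices h : ∃ (d : Fin r → ℝ) (t : ℝ), 0 < t ∧ d j = 1 ∧
          mv q d t ∈ CnP w ∧ mv q d (-t) ∈ CnP w by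
        obtain ⟨d, t, ht, hdj, hp, hm⟩ := h
        have hproj : ∀ s : ℝ, projP (mv q d s) = u := fun s => hq2
        have hmemp : mv q d t ∈ CnP w ∩ projP ⁻¹' {u} := ⟨hp, hproj t⟩
        have hmemm : mv q d (-t) ∈ CnP w ∩ projP ⁻¹' {u} := ⟨hm, hproj (-t)⟩
        have hseg : q ∈ openSegment ℝ (mv q d (-t)) (mv q d t) := by
          refine ⟨1/2, 1/2, by norm_num, by norm_num, by norm_num, ?_⟩
          funext b j'
          cases b with
          | none =>
            show (1/2) * (q none j' + (-t) * d j') + (1/2) * (q none j' + t * d j')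
              = q none j'
            ring
          | some i =>
            show (1/2) * q (some i) j' + (1/2) * q (some i) j' = q (some i) j'
            ring
        have heqq := (hext _ hmemm _ hmemp hseg).1
        have heq : q none j + (-t) * d j = q none j := congrFun (congrFun heqq none) j
        rw [hdj] at heq
        linarith
      rcases Nat.eq_zero_or_pos n with hn | hn
      · -- n = 0 : move a single coordinate
        refine ⟨Pi.single j 1, (min (q none j - ⌊q none j⌋) ((⌈q none j⌉ : ℝ) - q none j)) / 2,
          ?_, Pi.single_eq_same j 1, ?_, ?_⟩
        · have g1 : (0:ℝ) < q none j - ⌊q none j⌋ := sub_pos.2 (floor_lt_of_not_int hnz)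
          have g2 : (0:ℝ) < (⌈q none j⌉ : ℝ) - q none j := sub_pos.2 (lt_ceil_of_not_int hnz)
          have := lt_min g1 g2
          linarith
        all_goals {
          have g1 : (0:ℝ) < q none j - ⌊q none j⌋ := sub_pos.2 (floor_lt_of_not_int hnz)
          have g2 : (0:ℝ) < (⌈q none j⌉ : ℝ) - q none j := sub_pos.2 (lt_ceil_of_not_int hnz)
          have hmin1 : min (q none j - ⌊q none j⌋) ((⌈q none j⌉ : ℝ) - q none j)
              ≤ q none j - ⌊q none j⌋ := min_le_left _ _
          have hmin2 : min (q none j - ⌊q none j⌋) ((⌈q none j⌉ : ℝ) - q none j)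
              ≤ (⌈q none j⌉ : ℝ) - q none j := min_le_right _ _
          have hminpos := lt_min g1 g2
          refine move_strict hq1 hqint (Or.inl (by subst hn; infer_instance)) ?_ ?_ ?_ <;>
          · intro j' hdj'
            have hjj : j' = j := by
              by_contra hne
              simp [Pi.single_apply, hne] at hdj'
            subst hjj
            first
            | (exact hnz)
            | (rw [Pi.single_eq_same]; linarith)
        }
      · -- n ≥ 1 : move two coordinates
        have hqc : q ∈ coneDP n r := CnP_subset_coneDP hq1
        obtain ⟨k, hkj, hk⟩ := exists_second hqc ⟨0, hn⟩ (fun j' => hqint ⟨0, hn⟩ j') hnz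
        set d : Fin r → ℝ := Pi.single j 1 + Pi.single k (-1) with hd
        have hdj1 : d j = 1 := by
          simp [hd, Pi.single_apply, (Ne.symm hkj)]
        have hdk1 : d k = -1 := by
          simp [hd, Pi.single_apply, hkj]
        have hdsum : ∑ j', d j' = 0 := by
          simp [hd, Finset.sum_add_distrib, Finset.sum_pi_single']
        have g1j : (0:ℝ) < q none j - ⌊q none j⌋ := sub_pos.2 (floor_lt_of_not_int hnz)
        have g2j : (0:ℝ) < (⌈q none j⌉ : ℝ) - q none j := sub_pos.2 (lt_ceil_of_not_int hnz)
        have g1k : (0:ℝ) < q none k - ⌊q none k⌋ := sub_pos.2 (floor_lt_of_not_int hk)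
        have g2k : (0:ℝ) < (⌈q none k⌉ : ℝ) - q none k := sub_pos.2 (lt_ceil_of_not_int hk)
        set t : ℝ := (min (min (q none j - ⌊q none j⌋) ((⌈q none j⌉ : ℝ) - q none j))
          (min (q none k - ⌊q none k⌋) ((⌈q none k⌉ : ℝ) - q none k))) / 2 with htdef
        have htpos : 0 < t := by
          have := lt_min (lt_min g1j g2j) (lt_min g1k g2k)
          rw [htdef]; linarith
        have ht1 : t < q none j - ⌊q none j⌋ := by
          have h1 := min_le_left (min (q none j - ⌊q none j⌋) ((⌈q none j⌉ : ℝ) - q none j))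
            (min (q none k - ⌊q none k⌋) ((⌈q none k⌉ : ℝ) - q none k))
          have h2 := min_le_left (q none j - ⌊q none j⌋) ((⌈q none j⌉ : ℝ) - q none j)
          rw [htdef]; linarith [lt_min (lt_min g1j g2j) (lt_min g1k g2k)]
        have ht2 : t < (⌈q none j⌉ : ℝ) - q none j := by
          have h1 := min_le_left (min (q none j - ⌊q none j⌋) ((⌈q none j⌉ : ℝ) - q none j))
            (min (q none k - ⌊q none k⌋) ((⌈q none k⌉ : ℝ) - q none k))
          have h2 := min_le_right (q none j - ⌊q none j⌋) ((⌈q none j⌉ : ℝ) - q none j)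
          rw [htdef]; linarith [lt_min (lt_min g1j g2j) (lt_min g1k g2k)]
        have ht3 : t < q none k - ⌊q none k⌋ := by
          have h1 := min_le_right (min (q none j - ⌊q none j⌋) ((⌈q none j⌉ : ℝ) - q none j))
            (min (q none k - ⌊q none k⌋) ((⌈q none k⌉ : ℝ) - q none k))
          have h2 := min_le_left (q none k - ⌊q none k⌋) ((⌈q none k⌉ : ℝ) - q none k)
          rw [htdef]; linarith [lt_min (lt_min g1j g2j) (lt_min g1k g2k)]
        have ht4 : t < (⌈q none k⌉ : ℝ) - q none k := by
          have h1 := min_le_right (min (q none j - ⌊q none j⌋) ((⌈q none j⌉ : ℝ) - q none j))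
            (min (q none k - ⌊q none k⌋) ((⌈q none k⌉ : ℝ) - q none k))
          have h2 := min_le_right (q none k - ⌊q none k⌋) ((⌈q none k⌉ : ℝ) - q none k)
          rw [htdef]; linarith [lt_min (lt_min g1j g2j) (lt_min g1k g2k)]
        have hdcases : ∀ j', d j' ≠ 0 → j' = j ∨ j' = k := by
          intro j' hdj'
          by_contra hne
          push_neg at hne
          simp [hd, Pi.single_apply, hne.1, hne.2] at hdj'
        refine ⟨d, t, htpos, hdj1, ?_, ?_⟩ <;>
        · refine move_strict hq1 hqint (Or.inr hdsum) ?_ ?_ ?_ <;>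
          · intro j' hdj'
            rcases hdcases j' hdj' with h | h <;> subst h
            · first | (exact hnz) | (rw [hdj1]; linarith)
            · first | (exact hk) | (rw [hdk1]; linarith)
  · -- existence of an integral point in the fiber
    obtain ⟨q0, hq0, hpq0⟩ := hu
    have key : ∀ m : ℕ, ∀ q : Option (Fin n) → Fin r → ℝ, q ∈ CnP w → projP q = u →
        (Finset.univ.filter fun j => ¬∃ z : ℤ, q none j = (z : ℝ)).card ≤ m →
        ∃ q' ∈ CnP w, projP q' = u ∧ ∀ a j, ∃ z : ℤ, q' a j = (z : ℝ) := by
      intro m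
      induction m with
      | zero =>
        intro q h1 h2 h3
        refine ⟨q, h1, h2, ?_⟩
        have hemp := Finset.card_eq_zero.1 (Nat.le_zero.1 h3)
        have hall : ∀ j, ∃ z : ℤ, q none j = (z : ℝ) := by
          intro j
          by_contra hj
          exact Finset.eq_empty_iff_forall_notMem.1 hemp j
            (Finset.mem_filter.2 ⟨Finset.mem_univ j, hj⟩)
        intro a j
        cases a with
        | none => exact hall j
        | some i =>
          rw [show q (some i) j = u i j from congrFun (congrFun h2 i) j]
          exact hint i j
      | succ m ih =>
        intro q h1 h2 h3
        by_cases hc : (Finset.univ.filter fun j => ¬∃ z : ℤ, q none j = (z : ℝ)).card ≤ m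
        · exact ih q h1 h2 hc
        · have hpos : 0 < (Finset.univ.filter fun j => ¬∃ z : ℤ, q none j = (z : ℝ)).card :=
            Nat.pos_of_ne_zero (fun h0 => hc (h0 ▸ Nat.zero_le m))
          obtain ⟨j, hjmem⟩ := Finset.card_pos.1 hpos
          have hj : ¬∃ z : ℤ, q none j = (z : ℝ) := (Finset.mem_filter.1 hjmem).2
          have hqint : ∀ i j, ∃ z : ℤ, q (some i) j = (z : ℝ) := by
            intro i j'
            rw [show q (some i) j' = u i j' from congrFun (congrFun h2 i) j']
            exact hint i j'
          obtain ⟨q'', hq''C, hq''p, jw, hjwint, hjwold, hsub⟩ :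
              ∃ q'', q'' ∈ CnP w ∧ projP q'' = u ∧ ∃ jw,
                (∃ z : ℤ, q'' none jw = (z : ℝ)) ∧ (¬∃ z : ℤ, q none jw = (z : ℝ)) ∧
                ∀ j', (¬∃ z : ℤ, q'' none j' = (z : ℝ)) → ¬∃ z : ℤ, q none j' = (z : ℝ) := by
            rcases Nat.eq_zero_or_pos n with hn | hn
            · -- n = 0 : push coordinate j down to its floor
              set d : Fin r → ℝ := Pi.single j (-1) with hd
              set t : ℝ := q none j - ⌊q none j⌋ with htdef
              have hdj1 : d j = -1 := Pi.single_eq_same j (-1)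
              have hdc : ∀ j', d j' ≠ 0 → j' = j := by
                intro j' hdj'
                by_contra hne
                simp [hd, Pi.single_apply, hne] at hdj'
              have hmv : mv q d t ∈ CnP w := by
                refine move_weak h1 hqint (Or.inl (by subst hn; infer_instance)) ?_ ?_ ?_ <;>
                · intro j' hdj'
                  have hjj := hdc j' hdj'
                  subst hjj
                  first
                  | (exact hj)
                  | (rw [hdj1, htdef]; ring_nf; linarith [Int.floor_le (q none j'), Int.le_ceil (q none j'),
                      (Int.floor_le_ceil (q none j') : (⌊q none j'⌋:ℤ) ≤ ⌈q none j'⌉)])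
              refine ⟨mv q d t, hmv, h2, j, ⟨⌊q none j⌋, ?_⟩, hj, ?_⟩
              · show q none j + t * d j = ((⌊q none j⌋ : ℤ) : ℝ)
                rw [hdj1, htdef]; ring
              · intro j' hni' hqi'
                apply hni'
                by_cases hjj : j' = j
                · subst hjj; exact absurd hqi' hj
                · obtain ⟨z, hz⟩ := hqi'
                  have hd0 : d j' = 0 := by simp [hd, Pi.single_apply, hjj]
                  exact ⟨z, by show q none j' + t * d j' = (z : ℝ); rw [hd0, mul_zero, add_zero]; exact hz⟩
            · -- n ≥ 1 : move mass from k to j until one hits an integer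
              have hqc : q ∈ coneDP n r := CnP_subset_coneDP h1
              obtain ⟨k, hkj, hk⟩ := exists_second hqc ⟨0, hn⟩ (fun j' => hqint ⟨0, hn⟩ j') hj
              set d : Fin r → ℝ := Pi.single j 1 + Pi.single k (-1) with hd
              have hdj1 : d j = 1 := by simp [hd, Pi.single_apply, (Ne.symm hkj)]
              have hdk1 : d k = -1 := by simp [hd, Pi.single_apply, hkj]
              have hdsum : ∑ j', d j' = 0 := by
                simp [hd, Finset.sum_add_distrib, Finset.sum_pi_single']
              have hdcases : ∀ j', d j' ≠ 0 → j' = j ∨ j' = k := by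
                intro j' hdj'
                by_contra hne
                push_neg at hne
                simp [hd, Pi.single_apply, hne.1, hne.2] at hdj'
              set t : ℝ := min ((⌈q none j⌉ : ℝ) - q none j) (q none k - ⌊q none k⌋) with htdef
              have g2j : (0:ℝ) < (⌈q none j⌉ : ℝ) - q none j := sub_pos.2 (lt_ceil_of_not_int hj)
              have g1k : (0:ℝ) < q none k - ⌊q none k⌋ := sub_pos.2 (floor_lt_of_not_int hk)
              have htpos : 0 < t := lt_min g2j g1k
              have ht1 : t ≤ (⌈q none j⌉ : ℝ) - q none j := min_le_left _ _
              have ht2 : t ≤ q none k - ⌊q none k⌋ := min_le_right _ _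
              have hmv : mv q d t ∈ CnP w := by
                refine move_weak h1 hqint (Or.inr hdsum) ?_ ?_ ?_ <;>
                · intro j' hdj'
                  rcases hdcases j' hdj' with h | h <;> subst h
                  · first
                    | (exact hj)
                    | (rw [hdj1]; linarith [Int.floor_le (q none j'), Int.le_ceil (q none j')])
                  · first
                    | (exact hk)
                    | (rw [hdk1]; linarith [Int.floor_le (q none j'), Int.le_ceil (q none j')])
              have hother : ∀ j', j' ≠ j → j' ≠ k → mv q d t none j' = q none j' := by
                intro j' h1' h2'
                have hd0 : d j' = 0 := by simp [hd, Pi.single_apply, h1', h2']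
                show q none j' + t * d j' = q none j'
                rw [hd0, mul_zero, add_zero]
              have hsub' : ∀ j', (¬∃ z : ℤ, mv q d t none j' = (z : ℝ)) →
                  ¬∃ z : ℤ, q none j' = (z : ℝ) := by
                intro j' hni' hqi'
                apply hni'
                by_cases hjj : j' = j
                · subst hjj; exact absurd hqi' hj
                · by_cases hjk : j' = k
                  · subst hjk; exact absurd hqi' hk
                  · obtain ⟨z, hz⟩ := hqi'
                    exact ⟨z, by rw [hother j' hjj hjk]; exact hz⟩
              rcases le_total ((⌈q none j⌉ : ℝ) - q none j) (q none k - ⌊q none k⌋) with hmc | hmc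
              · refine ⟨mv q d t, hmv, h2, j, ⟨⌈q none j⌉, ?_⟩, hj, hsub'⟩
                show q none j + t * d j = ((⌈q none j⌉ : ℤ) : ℝ)
                rw [hdj1, htdef, min_eq_left hmc]; ring
              · refine ⟨mv q d t, hmv, h2, k, ⟨⌊q none k⌋, ?_⟩, hk, hsub'⟩
                show q none k + t * d k = ((⌊q none k⌋ : ℤ) : ℝ)
                rw [hdk1, htdef, min_eq_right hmc]; ring
          -- the number of non-integral coordinates strictly decreased
          have hsubset : (Finset.univ.filter fun j' => ¬∃ z : ℤ, q'' none j' = (z : ℝ)) ⊆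
              (Finset.univ.filter fun j' => ¬∃ z : ℤ, q none j' = (z : ℝ)) := by
            intro j' hj'
            rw [Finset.mem_filter] at hj' ⊢
            exact ⟨Finset.mem_univ _, hsub j' hj'.2⟩
          have hss : (Finset.univ.filter fun j' => ¬∃ z : ℤ, q'' none j' = (z : ℝ)) ⊂
              (Finset.univ.filter fun j' => ¬∃ z : ℤ, q none j' = (z : ℝ)) := by
            rw [Finset.ssubset_iff_of_subset hsubset]
            refine ⟨jw, Finset.mem_filter.2 ⟨Finset.mem_univ _, hjwold⟩, ?_⟩
            rw [Finset.mem_filter]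
            rintro ⟨-, hcon⟩
            exact hcon hjwint
          have hcard := Finset.card_lt_card hss
          exact ih q'' hq''C hq''p (by omega)
    exact key _ q0 hq0 hpq0 le_rfl
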